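/- Assume x₀ has full orbit under G, G acts nontrivially on x₀, and fix a subgroup sequence {1} = G₀ < G₁ < ⋯ < G_m = G with coset leader sets CL_k. If for every 1 ≤ k < m every induced coset leader in CL(G/G_k) is minimal, then the subgroup decoding algorithm decodes correctly with some noise: there exists δ > 0 such that for every g ∈ G and every received vector r with ‖r − g⁻¹x₀‖ < δ/2, every greedy run on r has output equal to g. -/

import Mathlib

open Set
open scoped Pointwise

noncomputable section

namespace GroupCode

variable {V : Type*} [NormedAddCommGroup V] [InnerProductSpace ℂ V]

/-- The group of linear isometries of a complex inner product space. -/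
abbrev Iso (V : Type*) [NormedAddCommGroup V] [InnerProductSpace ℂ V] := V ≃ₗᵢ[ℂ] V

/-- The stabilizer (isotropy) of `x₀` inside a subgroup `H`. -/
def Stab (x₀ : V) (H : Subgroup (Iso V)) : Set (Iso V) := {h | h ∈ H ∧ h x₀ = x₀}

/-- The fundamental region of a subgroup `H`. -/
def FR (x₀ : V) (H : Subgroup (Iso V)) : Set V :=
  {x | ∀ h ∈ H, h ∉ Stab x₀ H → ‖x - x₀‖ < ‖h x - x₀‖}

/-- The decoding region of a group element `g ∈ G`. -/
def DR (x₀ : V) (G : Subgroup (Iso V)) (g : Iso V) : Set V :=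
  {x | ∀ a ∈ G, a ∉ Stab x₀ G * ({g} : Set (Iso V)) → ‖g x - x₀‖ < ‖a x - x₀‖}

/-- `CL` is a set of coset leaders for `K` over `H`: a subset of `K` containing `1` and
exactly one element of each left coset of `H` in `K`. -/
def IsCosetLeaders (H K : Subgroup (Iso V)) (CL : Set (Iso V)) : Prop :=
  CL ⊆ (K : Set (Iso V)) ∧ (1 : Iso V) ∈ CL ∧ ∀ a ∈ K, ∃! c, c ∈ CL ∧ c⁻¹ * a ∈ H

/-- Greed compatibility of a set of coset leaders for `K` over `H`. -/
def GreedCompatible (x₀ : V) (H K : Subgroup (Iso V)) (CL : Set (Iso V)) : Prop :=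
  ∀ x ∈ FR x₀ H, ∃ c ∈ CL, c x ∈ FR x₀ K

/-- A coset leader `c` of `K` over `H` is minimal if `x₀ ∈ c(FR(H))`. -/
def Minimal (x₀ : V) (H : Subgroup (Iso V)) (c : Iso V) : Prop :=
  x₀ ∈ ⇑c '' FR x₀ H

/-- A coset leader `c` of `K` over `H` is region minimal if `FR(K) ⊆ c(FR(H))`. -/
def RegionMinimal (x₀ : V) (H K : Subgroup (Iso V)) (c : Iso V) : Prop :=
  FR x₀ K ⊆ ⇑c '' FR x₀ H

/-- The product `d_k ⋯ d_1`. -/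
def pprod {α : Type*} [Monoid α] (d : ℕ → α) (k : ℕ) : α :=
  (List.range k).foldl (fun acc j => d (j + 1) * acc) 1

/-- The product `cs_ℓ ⋯ cs_{k+1}` of induced coset leaders. -/
def pprodRange {α : Type*} [Monoid α] (cs : ℕ → α) (k ℓ : ℕ) : α :=
  (List.range (ℓ - k)).foldl (fun acc j => cs (k + 1 + j) * acc) 1

/-- A greedy run of the subgroup decoding algorithm on a received vector `r`:
at each step `k`, `d k ∈ CL k` minimizes the distance of `d (d_{k-1} ⋯ d_1 r)` to `x₀`
over all `d ∈ CL k`. -/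
def IsGreedyRun (x₀ : V) (CL : ℕ → Set (Iso V)) (m : ℕ) (r : V) (d : ℕ → Iso V) : Prop :=
  ∀ k < m, d (k + 1) ∈ CL (k + 1) ∧
    ∀ e ∈ CL (k + 1), ‖(d (k + 1)) ((pprod d k) r) - x₀‖ ≤ ‖e ((pprod d k) r) - x₀‖

theorem foldl_factor {α : Type*} [Monoid α] (g : ℕ → α) :
    ∀ (l : List ℕ) (a : α), l.foldl (fun acc j => g j * acc) a
      = l.foldl (fun acc j => g j * acc) 1 * a := by
  intro l
  induction l with
  | nil => intro a; simp
  | cons j l ih =>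
    intro a
    simp only [List.foldl_cons]
    rw [ih (g j * a), ih (g j * 1), mul_one, mul_assoc]

theorem pprod_succ {α : Type*} [Monoid α] (d : ℕ → α) (k : ℕ) :
    pprod d (k + 1) = d (k + 1) * pprod d k := by
  unfold pprod
  rw [List.range_succ, List.foldl_append]
  simp only [List.foldl_cons, List.foldl_nil]

theorem pprodRange_self {α : Type*} [Monoid α] (cs : ℕ → α) (k : ℕ) :
    pprodRange cs k k = 1 := by simp [pprodRange]

theorem pprodRange_peel {α : Type*} [Monoid α] (cs : ℕ → α) (k m : ℕ) (h : k < m) :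
    pprodRange cs k m = pprodRange cs (k + 1) m * cs (k + 1) := by
  unfold pprodRange
  have h1 : m - k = (m - (k + 1)) + 1 := by omega
  rw [h1, List.range_succ_eq_map, List.foldl_cons, List.foldl_map]
  have h2 : (fun (acc : α) j => (fun acc j => cs (k + 1 + j) * acc) acc (j + 1))
      = fun acc j => cs (k + 1 + 1 + j) * acc := by
    funext acc j; simp only []; congr 2; omega
  rw [h2, foldl_factor (fun j => cs (k + 1 + 1 + j))]
  simp

theorem pprodRange_top {α : Type*} [Monoid α] (cs : ℕ → α) (k ℓ : ℕ) (h : k ≤ ℓ) :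
    pprodRange cs k (ℓ + 1) = cs (ℓ + 1) * pprodRange cs k ℓ := by
  unfold pprodRange
  have h1 : ℓ + 1 - k = (ℓ - k) + 1 := by omega
  rw [h1, List.range_succ, List.foldl_append]
  simp only [List.foldl_cons, List.foldl_nil]
  rw [foldl_factor (fun j => cs (k + 1 + j)) (List.range (ℓ - k))]
  have : k + 1 + (ℓ - k) = ℓ + 1 := by omega
  rw [this, mul_one]

theorem pprodRange_congr {α : Type*} [Monoid α] {cs1 cs2 : ℕ → α} {k ℓ : ℕ}
    (h : ∀ i, k < i → i ≤ ℓ → cs1 i = cs2 i) : pprodRange cs1 k ℓ = pprodRange cs2 k ℓ := by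
  unfold pprodRange
  apply List.foldl_ext
  intro a j hj
  have hj' := List.mem_range.1 hj
  rw [h (k + 1 + j) (by omega) (by omega)]

end GroupCode

open GroupCode in
/-- **Theorem (Statement 3).** If all induced coset leaders for `G` over each `G_k` are
minimal, then the subgroup decoding algorithm decodes correctly with some noise. -/
theorem correct_decoding_with_noise_of_minimal_induced
    {V : Type*} [NormedAddCommGroup V] [InnerProductSpace ℂ V] [FiniteDimensional ℂ V]
    (G : Subgroup (Iso V)) (hGfin : (G : Set (Iso V)).Finite)
    (x₀ : V) (hx₀ : ‖x₀‖ = 1)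
    (hfull : Stab x₀ G = ({1} : Set (Iso V)))
    (hnontriv : ∃ g ∈ G, g x₀ ≠ x₀)
    (m : ℕ) (hm : 1 ≤ m)
    (Gs : ℕ → Subgroup (Iso V)) (CL : ℕ → Set (Iso V))
    (hG0 : Gs 0 = ⊥) (hGm : Gs m = G)
    (hlt : ∀ k < m, Gs k < Gs (k + 1))
    (hCL : ∀ k < m, IsCosetLeaders (Gs k) (Gs (k + 1)) (CL (k + 1)))
    (hmin : ∀ k, 1 ≤ k → k < m → ∀ cs : ℕ → Iso V,
      (∀ i, k < i → i ≤ m → cs i ∈ CL i) → Minimal x₀ (Gs k) (pprodRange cs k m)) :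
    ∃ δ > (0 : ℝ), ∀ g ∈ G, ∀ r : V, ‖r - g⁻¹ x₀‖ < δ / 2 →
      ∀ d : ℕ → Iso V, IsGreedyRun x₀ CL m r d → pprod d m = g := by
  classical
  -- monotonicity of the chain
  have hmono : ∀ l ≤ m, ∀ k ≤ l, Gs k ≤ Gs l := by
    intro l
    induction l with
    | zero =>
      intro _ k hk
      have : k = 0 := by omega
      subst this; exact le_rfl
    | succ n ih =>
      intro hl k hk
      rcases Nat.lt_or_ge k (n + 1) with h | h
      · exact (ih (by omega) k (by omega)).trans (hlt n (by omega)).le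
      · have : k = n + 1 := by omega
        subst this; exact le_rfl
  have hsubG : ∀ i ≤ m, (Gs i : Set (Iso V)) ⊆ (G : Set (Iso V)) := by
    intro i hi a ha
    exact hGm ▸ (hmono m le_rfl i hi ha)
  have hCLsub : ∀ k < m, CL (k + 1) ⊆ (Gs (k + 1) : Set (Iso V)) := fun k hk => (hCL k hk).1
  have hstab1 : ∀ a : Iso V, a ∈ G → a x₀ = x₀ → a = 1 := by
    intro a haG hax
    have : a ∈ Stab x₀ G := ⟨haG, hax⟩
    rw [hfull] at this
    exact this
  -- construction of δ
  obtain ⟨b, hbG, hbx⟩ := hnontriv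
  set F : Finset (Iso V) := hGfin.toFinset with hF
  set P : Finset (Iso V × Iso V) :=
    (F ×ˢ F).filter (fun p => ‖p.1 x₀ - x₀‖ < ‖p.2 x₀ - x₀‖) with hP
  have hmemF : ∀ a : Iso V, a ∈ G → a ∈ F := fun a ha => hGfin.mem_toFinset.2 ha
  have hPne : P.Nonempty := by
    refine ⟨(1, b), Finset.mem_filter.2 ⟨Finset.mem_product.2
      ⟨hmemF 1 G.one_mem, hmemF b hbG⟩, ?_⟩⟩
    show ‖(1 : Iso V) x₀ - x₀‖ < ‖b x₀ - x₀‖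
    have : (1 : Iso V) x₀ = x₀ := rfl
    rw [this, sub_self, norm_zero]
    exact norm_sub_pos_iff.2 (by simpa [sub_ne_zero] using hbx)
  set δ : ℝ := P.inf' hPne (fun p => ‖p.2 x₀ - x₀‖ - ‖p.1 x₀ - x₀‖) with hδ
  have hδpos : 0 < δ := by
    rw [hδ, Finset.lt_inf'_iff]
    intro p hp
    have := (Finset.mem_filter.1 hp).2
    linarith
  have hδle : ∀ a c : Iso V, a ∈ G → c ∈ G → ‖a x₀ - x₀‖ < ‖c x₀ - x₀‖ →
      ‖a x₀ - x₀‖ + δ ≤ ‖c x₀ - x₀‖ := by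
    intro a c haG hcG hlt'
    have hmem : (a, c) ∈ P := Finset.mem_filter.2
      ⟨Finset.mem_product.2 ⟨hmemF a haG, hmemF c hcG⟩, hlt'⟩
    have := Finset.inf'_le (fun p : Iso V × Iso V => ‖p.2 x₀ - x₀‖ - ‖p.1 x₀ - x₀‖) hmem
    rw [← hδ] at this
    linarith
  -- membership of induced coset leaders in G
  have hmemGaux : ∀ n ≤ m, ∀ cs : ℕ → Iso V,
      (∀ i, m - n < i → i ≤ m → cs i ∈ CL i) → pprodRange cs (m - n) m ∈ G := by
    intro n
    induction n with
    | zero =>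
      intro _ cs _
      simp only [Nat.sub_zero, pprodRange_self]
      exact G.one_mem
    | succ p ih =>
      intro hn cs hcs
      have hk : m - (p + 1) < m := by omega
      rw [pprodRange_peel cs (m - (p + 1)) m hk]
      have hkk : m - (p + 1) + 1 = m - p := by omega
      apply G.mul_mem
      · rw [hkk]
        exact ih (by omega) cs (fun i h1 h2 => hcs i (by omega) h2)
      · have := hcs (m - (p + 1) + 1) (by omega) (by omega)
        exact hsubG (m - (p + 1) + 1) (by omega) (hCLsub (m - (p + 1)) hk this)
  have hmemG : ∀ k ≤ m, ∀ cs : ℕ → Iso V,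
      (∀ i, k < i → i ≤ m → cs i ∈ CL i) → pprodRange cs k m ∈ G := by
    intro k hk cs hcs
    have h1 : m - (m - k) = k := by omega
    have := hmemGaux (m - k) (by omega) cs (by rw [h1]; exact hcs)
    rwa [h1] at this
  -- FR membership of inverses of induced coset leaders applied to x₀
  have hFRmem : ∀ k ≤ m, ∀ cs : ℕ → Iso V, (∀ i, k < i → i ≤ m → cs i ∈ CL i) →
      (pprodRange cs k m)⁻¹ x₀ ∈ FR x₀ (Gs k) := by
    intro k hk cs hcs
    rcases eq_or_lt_of_le hk with rfl | hkm
    · rw [pprodRange_self]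
      intro h hhG hhstab
      have hne : h x₀ ≠ x₀ := fun hx => hhstab ⟨hhG, hx⟩
      have : (1 : Iso V)⁻¹ x₀ = x₀ := rfl
      rw [this, sub_self, norm_zero]
      exact norm_sub_pos_iff.2 (by simpa [sub_ne_zero] using hne)
    rcases Nat.eq_zero_or_pos k with rfl | hk1
    · intro h hh hst
      have h1 : h = 1 := by rwa [hG0, Subgroup.mem_bot] at hh
      exact absurd ⟨hh, by rw [h1]; rfl⟩ hst
    · obtain ⟨y, hyFR, hyx⟩ := hmin k hk1 hkm cs hcs
      have hy : y = (pprodRange cs k m)⁻¹ x₀ := by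
        rw [← hyx]; simp
      rwa [← hy]
  -- existence of a coset-leader decomposition
  have hdecomp : ∀ j ≤ m, ∀ a : Iso V, a ∈ Gs j → ∃ cs : ℕ → Iso V,
      (∀ i, 0 < i → i ≤ m → cs i ∈ CL i) ∧ pprodRange cs 0 j = a := by
    intro j
    induction j with
    | zero =>
      intro _ a ha
      refine ⟨fun i => 1, fun i hi him => ?_, ?_⟩
      · obtain ⟨i', rfl⟩ : ∃ i', i = i' + 1 := ⟨i - 1, by omega⟩
        exact (hCL i' (by omega)).2.1
      · rw [pprodRange_self]
        rw [hG0, Subgroup.mem_bot] at ha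
        exact ha.symm
    | succ n ih =>
      intro hn a ha
      obtain ⟨c, ⟨hcCL, hcmem⟩, _⟩ := (hCL n (by omega)).2.2 a ha
      obtain ⟨cs, hcs, hprodeq⟩ := ih (by omega) _ hcmem
      refine ⟨Function.update cs (n + 1) c, ?_, ?_⟩
      · intro i hi him
        rcases eq_or_ne i (n + 1) with rfl | hne
        · rw [Function.update_self]; exact hcCL
        · rw [Function.update_of_ne hne]; exact hcs i hi him
      · rw [pprodRange_top _ 0 n (Nat.zero_le n), Function.update_self]
        have hcongr : pprodRange (Function.update cs (n + 1) c) 0 n = pprodRange cs 0 n := by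
          apply pprodRange_congr
          intro i h1 h2
          exact Function.update_of_ne (by omega) _ _
        rw [hcongr, hprodeq]
        group
  -- main argument
  refine ⟨δ, hδpos, ?_⟩
  intro g hg r hr d hgreedy
  obtain ⟨cs0, hcs0, hprod0⟩ := hdecomp m le_rfl g (hGm ▸ hg)
  have key : ∀ k ≤ m, ∃ cs : ℕ → Iso V, (∀ i, k < i → i ≤ m → cs i ∈ CL i) ∧
      g * (pprod d k)⁻¹ = pprodRange cs k m := by
    intro k
    induction k with
    | zero =>
      intro _
      refine ⟨cs0, fun i hi him => hcs0 i hi him, ?_⟩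
      have : pprod d 0 = 1 := rfl
      rw [this, inv_one, mul_one, hprod0]
    | succ n ih =>
      intro hn
      obtain ⟨cs, hcs, hck⟩ := ih (by omega)
      have hnm : n < m := by omega
      set s : Iso V := pprod d n with hs
      set z : V := s r with hz
      set ck : Iso V := pprodRange cs n m with hckdef
      set c' : Iso V := pprodRange cs (n + 1) m with hc'
      set e : Iso V := cs (n + 1) with he
      have heCL : e ∈ CL (n + 1) := hcs (n + 1) (by omega) (by omega)
      have hpeel : ck = c' * e := pprodRange_peel cs n m hnm
      have hcs' : ∀ i, n + 1 < i → i ≤ m → cs i ∈ CL i := fun i h1 h2 => hcs i (by omega) h2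
      have hc'G : c' ∈ G := hmemG (n + 1) hn cs hcs'
      have hyFR : c'⁻¹ x₀ ∈ FR x₀ (Gs (n + 1)) := hFRmem (n + 1) hn cs hcs'
      -- distance of z to ck⁻¹ x₀
      have hzdist : ‖z - ck⁻¹ x₀‖ < δ / 2 := by
        have h1 : ck⁻¹ x₀ = s (g⁻¹ x₀) := by
          rw [← hck, mul_inv_rev, inv_inv]; rfl
        rw [h1, hz]
        calc ‖s r - s (g⁻¹ x₀)‖ = ‖r - g⁻¹ x₀‖ := by rw [← map_sub, s.norm_map]
        _ < δ / 2 := hr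
      -- value of the correct choice e
      have heval : e (ck⁻¹ x₀) = c'⁻¹ x₀ := by
        rw [hpeel, mul_inv_rev]
        show e (e⁻¹ (c'⁻¹ x₀)) = c'⁻¹ x₀
        simp
      have hegood : ‖e z - x₀‖ < δ / 2 + ‖c'⁻¹ x₀ - x₀‖ := by
        have t1 : ‖e z - x₀‖ ≤ ‖e z - e (ck⁻¹ x₀)‖ + ‖e (ck⁻¹ x₀) - x₀‖ := by
          have := norm_add_le (e z - e (ck⁻¹ x₀)) (e (ck⁻¹ x₀) - x₀)
          rwa [sub_add_sub_cancel] at this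
        have t2 : ‖e z - e (ck⁻¹ x₀)‖ = ‖z - ck⁻¹ x₀‖ := by rw [← map_sub, e.norm_map]
        rw [t2, heval] at t1
        linarith
      -- the greedy choice must equal e
      have hgstep := hgreedy n hnm
      have hde : d (n + 1) = e := by
        by_contra hne
        set dd : Iso V := d (n + 1) with hdd
        have hddCL : dd ∈ CL (n + 1) := hgstep.1
        have hddG : dd ∈ Gs (n + 1) := hCLsub n hnm hddCL
        have heG : e ∈ Gs (n + 1) := hCLsub n hnm heCL
        set h : Iso V := dd * e⁻¹ with hh
        have hhmem : h ∈ Gs (n + 1) := (Gs (n + 1)).mul_mem hddG (inv_mem heG)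
        have hh1 : h ≠ 1 := by
          intro h1
          apply hne
          have : dd = e := by
            have := mul_inv_eq_one.1 h1
            exact this
          exact this
        have hhstab : h ∉ Stab x₀ (Gs (n + 1)) := by
          intro hst
          exact hh1 (hstab1 h (hsubG (n + 1) hn hhmem) hst.2)
        have hfr := hyFR h hhmem hhstab
        -- quantitative gap
        have hhc'G : h * c'⁻¹ ∈ G := G.mul_mem (hsubG (n + 1) hn hhmem) (inv_mem hc'G)
        have happ : h (c'⁻¹ x₀) = (h * c'⁻¹) x₀ := rfl
        have hgap : ‖c'⁻¹ x₀ - x₀‖ + δ ≤ ‖(h * c'⁻¹) x₀ - x₀‖ := by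
          apply hδle c'⁻¹ (h * c'⁻¹) (inv_mem hc'G) hhc'G
          rw [← happ]
          exact hfr
        -- value of the wrong choice dd
        have hdval : dd (ck⁻¹ x₀) = (h * c'⁻¹) x₀ := by
          rw [hpeel, mul_inv_rev]
          show dd (e⁻¹ (c'⁻¹ x₀)) = (dd * e⁻¹) (c'⁻¹ x₀)
          rfl
        have hdbad : ‖c'⁻¹ x₀ - x₀‖ + δ / 2 < ‖dd z - x₀‖ := by
          have t1 : ‖dd (ck⁻¹ x₀) - x₀‖ ≤ ‖dd (ck⁻¹ x₀) - dd z‖ + ‖dd z - x₀‖ := by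
            have := norm_add_le (dd (ck⁻¹ x₀) - dd z) (dd z - x₀)
            rwa [sub_add_sub_cancel] at this
          have t2 : ‖dd (ck⁻¹ x₀) - dd z‖ = ‖z - ck⁻¹ x₀‖ := by
            rw [← map_sub, dd.norm_map, norm_sub_rev]
          rw [t2, hdval] at t1
          linarith
        have hgr := hgstep.2 e heCL
        linarith
      -- conclude the induction step
      refine ⟨cs, hcs', ?_⟩
      rw [pprod_succ, hde, mul_inv_rev, ← mul_assoc, hck, hpeel]
      rw [mul_inv_cancel_right]
  obtain ⟨cs, _, hfin⟩ := key m le_rfl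
  rw [pprodRange_self] at hfin
  exact (mul_inv_eq_one.1 hfin).symm
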